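/- Let g_{2m+1}(x) = x·∏_{i=1}^{m}(x² - [2i]²) and g^{(2m+1)}(x) = g_{2m+1}(x)/[2m+1]!, where [n]! = [1][2]⋯[n] is the quantum factorial. Then for every ℓ ∈ ℤ and m ∈ ℕ, the evaluation g^{(2m+1)}([2ℓ]) lies in ℤ[q, q^{-1}]. In fact g^{(2m+1)}([2ℓ]) = \binom{ℓ+m}{2m+1}_q · ∏_{i=-m}^{m}(q^{ℓ+i} + q^{-ℓ-i}), where \binom{a}{n}_q denotes the Gaussian (q-)binomial coefficient. -/

import Mathlib

open Finset Polynomial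

noncomputable def q : RatFunc ℚ := RatFunc.X

noncomputable def qa (n : ℤ) : RatFunc ℚ := (q ^ n - q ^ (-n)) / (q - q⁻¹)

noncomputable def qfac (n : ℕ) : RatFunc ℚ := ∏ k ∈ Finset.range n, qa ((k : ℤ) + 1)

noncomputable def qbin (a : ℤ) (n : ℕ) : RatFunc ℚ :=
  ∏ k ∈ Finset.range n, qa (a - (k : ℤ)) / qa ((k : ℤ) + 1)

noncomputable def qa2 (n : ℤ) : RatFunc ℚ :=
  (q ^ (2 * n) - q ^ (-(2 * n))) / (q ^ (2 : ℤ) - q ^ (-2 : ℤ))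

noncomputable def qbin2 (a : ℤ) (n : ℕ) : RatFunc ℚ :=
  ∏ k ∈ Finset.range n, qa2 (a - (k : ℤ)) / qa2 ((k : ℤ) + 1)

noncomputable def LaurentZ : Subring (RatFunc ℚ) := Subring.closure {q, q⁻¹}

noncomputable def NatLaurent : Subsemiring (RatFunc ℚ) := Subsemiring.closure {q⁻¹}

/-- g^{(2m+1)}([2ℓ]) where g_{2m+1}(x) = x·∏_{i=1}^m (x² - [2i]²). -/
noncomputable def gOddEval (ℓ : ℤ) (m : ℕ) : RatFunc ℚ :=
  (qa (2 * ℓ) * ∏ i ∈ Finset.range m, (qa (2 * ℓ) ^ 2 - qa (2 * ((i : ℤ) + 1)) ^ 2))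
    / qfac (2 * m + 1)

/- ### Auxiliary lemmas -/

lemma hq0 : q ≠ 0 := RatFunc.X_ne_zero

lemma q_pow_ne_one {n : ℕ} (hn : n ≠ 0) : q ^ n ≠ 1 := by
  intro h
  have h2 : (algebraMap (Polynomial ℚ) (RatFunc ℚ)) (Polynomial.X ^ n) =
      (algebraMap (Polynomial ℚ) (RatFunc ℚ)) 1 := by
    simpa [q, RatFunc.algebraMap_X, map_pow] using h
  have := RatFunc.algebraMap_injective ℚ h2
  have := congrArg Polynomial.natDegree this
  simp [Polynomial.natDegree_X_pow] at this
  exact hn this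

lemma q_zpow_ne_one {n : ℤ} (hn : n ≠ 0) : q ^ n ≠ 1 := by
  rcases lt_or_gt_of_ne hn with h | h
  · intro he
    have : q ^ (-n) = 1 := by rw [zpow_neg, he, inv_one]
    rw [show (-n) = ((-n).toNat : ℤ) by omega, zpow_natCast] at this
    exact q_pow_ne_one (by omega) this
  · intro he
    rw [show n = (n.toNat : ℤ) by omega, zpow_natCast] at he
    exact q_pow_ne_one (by omega) he

lemma hden : q - q⁻¹ ≠ 0 := by
  intro h
  have h1 : q = q⁻¹ := by linear_combination h
  have : q ^ (2:ℤ) = 1 := by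
    rw [show (2:ℤ) = 1 + 1 by norm_num, zpow_add₀ hq0]
    nth_rewrite 2 [h1]
    simp [hq0]
  exact q_zpow_ne_one (by norm_num) this

lemma qa_ne_zero {n : ℤ} (hn : n ≠ 0) : qa n ≠ 0 := by
  unfold qa
  apply div_ne_zero _ hden
  intro h
  have h1 : q ^ n = q ^ (-n) := by linear_combination h
  have : q ^ (2 * n) = 1 := by
    rw [show 2 * n = n + n by ring, zpow_add₀ hq0]
    nth_rewrite 2 [h1]
    rw [← zpow_add₀ hq0]
    simp
  exact q_zpow_ne_one (by omega) this

lemma qa_zero : qa 0 = 0 := by simp [qa]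

lemma qfac_ne_zero (n : ℕ) : qfac n ≠ 0 := by
  unfold qfac
  rw [Finset.prod_ne_zero_iff]
  intro k _
  exact qa_ne_zero (by omega)

/-- Key identity: [a] = q^b [a-b] + q^{b-a} [b]. -/
lemma key (a b : ℤ) : qa a = q ^ b * qa (a - b) + q ^ (b - a) * qa b := by
  unfold qa
  rw [← mul_div_assoc, ← mul_div_assoc, ← add_div]
  congr 1
  rw [mul_sub, mul_sub, ← zpow_add₀ hq0, ← zpow_add₀ hq0, ← zpow_add₀ hq0, ← zpow_add₀ hq0,
    show b + (a - b) = a by ring, show b - a + -b = -a by ring,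
    show b + -(a - b) = b - a + b by ring]
  ring

lemma q_mul_expand (u v : ℤ) :
    (q ^ u - q ^ (-u)) * (q ^ v - q ^ (-v)) =
      q ^ (u + v) - q ^ (u - v) - q ^ (v - u) + q ^ (-(u + v)) := by
  rw [sub_mul, mul_sub, mul_sub, ← zpow_add₀ hq0, ← zpow_add₀ hq0, ← zpow_add₀ hq0,
    ← zpow_add₀ hq0, show u + -v = u - v by ring, show -u + v = v - u by ring,
    show -u + -v = -(u + v) by ring]
  ring

/-- Difference of squares: [x]² - [y]² = [x+y][x-y]. -/
lemma diffsq (x y : ℤ) : qa x ^ 2 - qa y ^ 2 = qa (x + y) * qa (x - y) := by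
  unfold qa
  rw [div_pow, div_pow, div_sub_div_same, div_mul_div_comm]
  congr 1
  · rw [sq, sq, q_mul_expand, q_mul_expand, q_mul_expand,
      show x - x = 0 by ring, show y - y = 0 by ring,
      show x + y + (x - y) = x + x by ring, show x + y - (x - y) = y + y by ring,
      show x - y - (x + y) = -(y + y) by ring]
    simp only [zpow_zero, zpow_neg]
    ring
  · ring

/-- Doubling: [2j] = [j](q^j + q^{-j}). -/
lemma qa_double (j : ℤ) : qa (2 * j) = qa j * (q ^ j + q ^ (-j)) := by
  unfold qa
  rw [div_mul_eq_mul_div]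
  congr 1
  rw [sub_mul, mul_add, mul_add, ← zpow_add₀ hq0, ← zpow_add₀ hq0, ← zpow_add₀ hq0,
    ← zpow_add₀ hq0, show j + j = 2 * j by ring, show j + -j = 0 by ring,
    show -j + j = 0 by ring, show -j + -j = -(2 * j) by ring]
  ring

/-- Numerator form of the q-binomial. -/
lemma qbin_eq (a : ℤ) (n : ℕ) :
    qbin a n = (∏ k ∈ Finset.range n, qa (a - (k : ℤ))) / qfac n := by
  unfold qbin qfac
  rw [Finset.prod_div_distrib]

/-- Pascal identity for balanced q-binomials. -/
lemma pascal (a : ℤ) (n : ℕ) :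
    qbin a (n + 1) = q ^ ((n : ℤ) + 1) * qbin (a - 1) (n + 1)
      + q ^ ((n : ℤ) + 1 - a) * qbin (a - 1) n := by
  rw [qbin_eq, qbin_eq, qbin_eq]
  have hP : ∏ k ∈ Finset.range (n + 1), qa (a - (k : ℤ))
      = (∏ k ∈ Finset.range n, qa (a - 1 - (k : ℤ))) * qa a := by
    rw [Finset.prod_range_succ']
    congr 1
    · apply Finset.prod_congr rfl
      intro k _
      congr 1
      push_cast
      ring
    · congr 1
      push_cast
      ring
  have hP2 : ∏ k ∈ Finset.range (n + 1), qa (a - 1 - (k : ℤ))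
      = (∏ k ∈ Finset.range n, qa (a - 1 - (k : ℤ))) * qa (a - 1 - n) := by
    rw [Finset.prod_range_succ]
  have hF : qfac (n + 1) = qfac n * qa ((n : ℤ) + 1) := by
    unfold qfac
    rw [Finset.prod_range_succ]
  rw [hP, hP2, hF, key a ((n : ℤ) + 1)]
  have h1 : qfac n ≠ 0 := qfac_ne_zero n
  have h2 : qa ((n : ℤ) + 1) ≠ 0 := qa_ne_zero (by omega)
  field_simp
  rw [show a - ((n : ℤ) + 1) = a - 1 - n by ring]

lemma q_mem : q ∈ LaurentZ := Subring.subset_closure (by simp)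

lemma qinv_mem : q⁻¹ ∈ LaurentZ := Subring.subset_closure (by simp)

lemma q_zpow_mem (n : ℤ) : q ^ n ∈ LaurentZ := by
  rcases le_or_gt 0 n with h | h
  · rw [show n = (n.toNat : ℤ) by omega, zpow_natCast]
    exact pow_mem q_mem _
  · rw [show n = -(((-n).toNat : ℕ) : ℤ) by omega, zpow_neg, ← inv_zpow, zpow_natCast]
    exact pow_mem qinv_mem _

lemma qbin_mem (n : ℕ) : ∀ a : ℤ, qbin a n ∈ LaurentZ := by
  induction n with
  | zero => intro a; simp [qbin, one_mem]
  | succ n ih =>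
    intro a
    induction a using Int.induction_on with
    | zero =>
      have : qbin 0 (n + 1) = 0 := by
        apply Finset.prod_eq_zero (Finset.mem_range.mpr (Nat.succ_pos n))
        simp [qa_zero]
      rw [this]
      exact zero_mem _
    | succ k hk =>
      rw [pascal ((k : ℤ) + 1) n, show ((k : ℤ) + 1 - 1) = (k : ℤ) by ring]
      exact add_mem (mul_mem (q_zpow_mem _) hk) (mul_mem (q_zpow_mem _) (ih _))
    | pred k hk =>
      have hp := pascal (-(k : ℤ)) n
      have hqn : q ^ ((n : ℤ) + 1) ≠ 0 := zpow_ne_zero _ hq0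
      have e : qbin (-(k : ℤ) - 1) (n + 1)
          = q ^ (-((n : ℤ) + 1)) * (qbin (-(k : ℤ)) (n + 1)
            - q ^ ((n : ℤ) + 1 - (-(k : ℤ))) * qbin (-(k : ℤ) - 1) n) := by
        rw [hp, zpow_neg, inv_mul_eq_div, eq_div_iff hqn]
        ring
      rw [e]
      exact mul_mem (q_zpow_mem _)
        (sub_mem hk (mul_mem (q_zpow_mem _) (ih _)))

/-- Product form of the numerator of gOddEval. -/
lemma numerator_eq (ℓ : ℤ) (m : ℕ) :
    qa (2 * ℓ) * ∏ i ∈ Finset.range m, (qa (2 * ℓ) ^ 2 - qa (2 * ((i : ℤ) + 1)) ^ 2)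
      = ∏ j ∈ Finset.Icc (ℓ - (m : ℤ)) (ℓ + (m : ℤ)), qa (2 * j) := by
  induction m with
  | zero => simp
  | succ m ih =>
    have hset : Finset.Icc (ℓ - ((m:ℤ) + 1)) (ℓ + ((m:ℤ) + 1))
        = insert (ℓ - ((m:ℤ)+1)) (insert (ℓ + ((m:ℤ)+1))
            (Finset.Icc (ℓ - (m:ℤ)) (ℓ + (m:ℤ)))) := by
      ext x; simp only [Finset.mem_Icc, Finset.mem_insert]; omega
    push_cast
    rw [hset, Finset.prod_insert, Finset.prod_insert, Finset.prod_range_succ, ← mul_assoc, ← ih,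
      diffsq (2 * ℓ) (2 * ((m:ℤ) + 1)),
      show 2 * ℓ + 2 * ((m:ℤ) + 1) = 2 * (ℓ + ((m:ℤ)+1)) by ring,
      show 2 * ℓ - 2 * ((m:ℤ) + 1) = 2 * (ℓ - ((m:ℤ)+1)) by ring]
    · ring
    · simp only [Finset.mem_Icc]; omega
    · simp only [Finset.mem_insert, Finset.mem_Icc]; omega

lemma reindex (ℓ : ℤ) (m : ℕ) :
    ∏ k ∈ Finset.range (2 * m + 1), qa (ℓ + (m : ℤ) - (k : ℤ))
      = ∏ j ∈ Finset.Icc (ℓ - (m : ℤ)) (ℓ + (m : ℤ)), qa j := by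
  apply Finset.prod_nbij' (fun k : ℕ => ℓ + (m : ℤ) - k) (fun x : ℤ => (ℓ + (m : ℤ) - x).toNat)
  · intro k hk
    simp only [Finset.mem_range] at hk
    simp only [Finset.mem_Icc]
    omega
  · intro x hx
    simp only [Finset.mem_Icc] at hx
    simp only [Finset.mem_range]
    omega
  · intro k hk
    simp only [Finset.mem_range] at hk
    omega
  · intro x hx
    simp only [Finset.mem_Icc] at hx
    omega
  · intro k _
    rfl

lemma shift (ℓ : ℤ) (m : ℕ) :
    ∏ i ∈ Finset.Icc (-(m : ℤ)) (m : ℤ), (q ^ (ℓ + i) + q ^ (-(ℓ + i)))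
      = ∏ j ∈ Finset.Icc (ℓ - (m : ℤ)) (ℓ + (m : ℤ)), (q ^ j + q ^ (-j)) := by
  apply Finset.prod_nbij' (fun i : ℤ => ℓ + i) (fun j : ℤ => j - ℓ)
  · intro i hi
    simp only [Finset.mem_Icc] at *
    omega
  · intro j hj
    simp only [Finset.mem_Icc] at *
    omega
  · intro i _; ring
  · intro j _; ring
  · intro i _; rfl

theorem stmt2 (ℓ : ℤ) (m : ℕ) :
    gOddEval ℓ m ∈ LaurentZ ∧
    gOddEval ℓ m = qbin (ℓ + m) (2 * m + 1)
      * ∏ i ∈ Finset.Icc (-(m : ℤ)) (m : ℤ), (q ^ (ℓ + i) + q ^ (-(ℓ + i))) := by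
  have hsplit : ∏ j ∈ Finset.Icc (ℓ - (m : ℤ)) (ℓ + (m : ℤ)), qa (2 * j)
      = (∏ j ∈ Finset.Icc (ℓ - (m : ℤ)) (ℓ + (m : ℤ)), qa j)
        * ∏ j ∈ Finset.Icc (ℓ - (m : ℤ)) (ℓ + (m : ℤ)), (q ^ j + q ^ (-j)) := by
    rw [← Finset.prod_mul_distrib]
    exact Finset.prod_congr rfl fun j _ => qa_double j
  have heq : gOddEval ℓ m = qbin (ℓ + m) (2 * m + 1)
      * ∏ i ∈ Finset.Icc (-(m : ℤ)) (m : ℤ), (q ^ (ℓ + i) + q ^ (-(ℓ + i))) := by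
    unfold gOddEval
    rw [numerator_eq, hsplit, qbin_eq, reindex, shift, div_mul_eq_mul_div]
  refine ⟨?_, heq⟩
  rw [heq]
  exact mul_mem (qbin_mem _ _)
    (prod_mem fun i _ => add_mem (q_zpow_mem _) (q_zpow_mem _))
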